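/- Let n ≥ 2 and let T be a real symmetric n×n matrix with tr T = 0. Then equality |tr(T³)| = ((n−2)/√(n(n−1))) · ‖T‖³ holds if and only if there exists λ ∈ ℝ such that T is orthogonally diagonalizable with n−1 eigenvalues equal to λ and one eigenvalue equal to −(n−1)λ. -/

import Mathlib

open Matrix


lemma traces_aux {n : ℕ} (P : Matrix (Fin n) (Fin n) ℝ) (hP : P * P.transpose = 1)
    (d : Fin n → ℝ) (T : Matrix (Fin n) (Fin n) ℝ)
    (hT : T = P.transpose * Matrix.diagonal d * P) :
    T.trace = ∑ i, d i ∧ (T ^ 3).trace = ∑ i, (d i) ^ 3 ∧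
      (∑ i, ∑ j, (T i j) ^ 2) = ∑ i, (d i) ^ 2 := by
  have hTt : T.transpose = T := by
    rw [hT]; simp [Matrix.transpose_mul, Matrix.diagonal_transpose, Matrix.mul_assoc]
  have hmul : ∀ A B : Matrix (Fin n) (Fin n) ℝ,
      (P.transpose * A * P) * (P.transpose * B * P) = P.transpose * (A * B) * P := by
    intro A B
    rw [Matrix.mul_assoc (P.transpose * A), ← Matrix.mul_assoc P (P.transpose * B),
      ← Matrix.mul_assoc P P.transpose, hP, Matrix.one_mul, ← Matrix.mul_assoc,
      ← Matrix.mul_assoc]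
  have htr : ∀ A : Matrix (Fin n) (Fin n) ℝ, (P.transpose * A * P).trace = A.trace := by
    intro A
    rw [Matrix.trace_mul_cycle, hP, Matrix.one_mul]
  have h2 : T * T = P.transpose * Matrix.diagonal (fun i => d i ^ 2) * P := by
    rw [hT, hmul, Matrix.diagonal_mul_diagonal,
      show (fun i => d i * d i) = fun i => d i ^ 2 from funext fun i => (sq _).symm]
  have h3 : T ^ 3 = P.transpose * Matrix.diagonal (fun i => d i ^ 3) * P := by
    have h33 : T ^ 3 = T * T * T := by rw [pow_succ, pow_two]
    rw [h33, h2, hT, hmul, Matrix.diagonal_mul_diagonal,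
      show (fun i => d i ^ 2 * d i) = fun i => d i ^ 3 from funext fun i => by ring]
  refine ⟨by rw [hT, htr, Matrix.trace_diagonal], by rw [h3, htr, Matrix.trace_diagonal], ?_⟩
  have hsym' : ∀ i j, T j i = T i j := fun i j => congr_fun (congr_fun hTt i) j
  have hfrob : (∑ i, ∑ j, (T i j) ^ 2) = (T * T).trace := by
    rw [Matrix.trace]
    refine Finset.sum_congr rfl fun i _ => ?_
    rw [Matrix.diag, Matrix.mul_apply]
    refine Finset.sum_congr rfl fun j _ => ?_
    rw [hsym' i j, sq]
  rw [hfrob, h2, htr, Matrix.trace_diagonal]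


lemma sum_update_pow {n : ℕ} (lam v : ℝ) (i₀ : Fin n) (k : ℕ) :
    ∑ i, (Function.update (fun _ : Fin n => lam) i₀ v i) ^ k
      = v ^ k + ((n : ℝ) - 1) * lam ^ k := by
  rw [← Finset.add_sum_erase _ _ (Finset.mem_univ i₀), Function.update_self]
  congr 1
  rw [Finset.sum_congr rfl (fun i hi => by
    rw [Function.update_of_ne (Finset.ne_of_mem_erase hi)]),
    Finset.sum_const, Finset.card_erase_of_mem (Finset.mem_univ i₀), Finset.card_univ,
    Fintype.card_fin, nsmul_eq_mul]
  have hn1 : 1 ≤ n := i₀.pos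
  push_cast [Nat.cast_sub hn1]
  ring

lemma eq_of_update {n : ℕ} (hn : 2 ≤ n) (lam : ℝ) (i₀ : Fin n) :
    |∑ i, (Function.update (fun _ : Fin n => lam) i₀ (-((n : ℝ) - 1) * lam) i) ^ 3| =
      ((n : ℝ) - 2) / Real.sqrt ((n : ℝ) * ((n : ℝ) - 1)) *
        (Real.sqrt (∑ i, (Function.update (fun _ : Fin n => lam) i₀
          (-((n : ℝ) - 1) * lam) i) ^ 2)) ^ 3 := by
  rw [sum_update_pow, sum_update_pow]
  set m : ℝ := (n : ℝ) - 1 with hm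
  have hm1 : 1 ≤ m := by
    have : (2 : ℝ) ≤ (n : ℝ) := by exact_mod_cast hn
    simp [hm]; linarith
  have hN : (0 : ℝ) < (n : ℝ) * m := by
    have : (2 : ℝ) ≤ (n : ℝ) := by exact_mod_cast hn
    nlinarith
  have hs2 : (-m * lam) ^ 2 + m * lam ^ 2 = ((n : ℝ) * m) * lam ^ 2 := by
    rw [hm]; ring
  have hs3 : (-m * lam) ^ 3 + m * lam ^ 3 = -(((n : ℝ) * m) * (m - 1)) * lam ^ 3 := by
    rw [hm]; ring
  rw [hs2, hs3]
  have hsqrtN : Real.sqrt ((n : ℝ) * m * lam ^ 2)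
      = Real.sqrt ((n : ℝ) * m) * |lam| := by
    rw [Real.sqrt_mul hN.le, Real.sqrt_sq_eq_abs]
  rw [hsqrtN]
  have hsN : (0 : ℝ) < Real.sqrt ((n : ℝ) * m) := Real.sqrt_pos.mpr hN
  have hcube : (Real.sqrt ((n : ℝ) * m) * |lam|) ^ 3
      = ((n : ℝ) * m) * Real.sqrt ((n : ℝ) * m) * |lam| ^ 3 := by
    rw [mul_pow]
    rw [show (Real.sqrt ((n : ℝ) * m)) ^ 3
      = (Real.sqrt ((n : ℝ) * m)) ^ 2 * Real.sqrt ((n : ℝ) * m) from by ring,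
      Real.sq_sqrt hN.le]
  rw [hcube]
  have habs : |(-(((n : ℝ) * m) * (m - 1)) * lam ^ 3)| = ((n : ℝ) * m) * (m - 1) * |lam| ^ 3 := by
    rw [abs_mul, abs_neg, abs_mul, ← abs_pow]
    rw [abs_of_nonneg hN.le, abs_of_nonneg (by linarith : (0:ℝ) ≤ m - 1)]
  rw [habs]
  have hmn : (n : ℝ) - 2 = m - 1 := by rw [hm]; ring
  rw [hmn]
  field_simp


set_option maxHeartbeats 1000000 in
lemma okumura_min {n : ℕ} (hn : 3 ≤ n) (x : Fin n → ℝ)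
    (hsum : ∑ i, x i = 0)
    (heq : ∑ i, (x i) ^ 3 =
      -(((n : ℝ) - 2) / Real.sqrt ((n : ℝ) * ((n : ℝ) - 1)) *
        (Real.sqrt (∑ i, (x i) ^ 2)) ^ 3)) :
    ∃ (lam : ℝ) (i₀ : Fin n),
      x = Function.update (fun _ : Fin n => lam) i₀ (-((n : ℝ) - 1) * lam) := by
  have hn' : (3 : ℝ) ≤ (n : ℝ) := by exact_mod_cast hn
  set m : ℝ := (n : ℝ) - 1 with hmdef
  clear_value m
  have hm2 : (2 : ℝ) ≤ m := by rw [hmdef]; linarith only [hn']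
  have hm0 : (0 : ℝ) < m := by linarith only [hm2]
  set S : ℝ := ∑ i, (x i) ^ 2 with hSdef
  clear_value S
  have hS0 : (0 : ℝ) ≤ S := by
    rw [hSdef]; exact Finset.sum_nonneg fun i _ => sq_nonneg _
  set s : ℝ := Real.sqrt S with hsdef
  clear_value s
  have hSs : s ^ 2 = S := by rw [hsdef]; exact Real.sq_sqrt hS0
  rcases eq_or_lt_of_le hS0 with hS | hS
  · -- S = 0 : all entries are zero
    have hx0 : ∀ i, x i = 0 := by
      intro i
      rw [hSdef] at hS
      have h := (Finset.sum_eq_zero_iff_of_nonneg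
        (fun i (_ : i ∈ Finset.univ) => sq_nonneg (x i))).mp hS.symm i (Finset.mem_univ i)
      exact pow_eq_zero_iff two_ne_zero |>.mp h
    refine ⟨0, ⟨0, by omega⟩, funext fun i => ?_⟩
    rw [hx0 i]
    rcases eq_or_ne i ⟨0, by omega⟩ with h | h
    · rw [h, Function.update_self]; ring
    · rw [Function.update_of_ne h]
  · -- S > 0
    obtain ⟨i₀, -, hi₀⟩ := Finset.exists_min_image Finset.univ x ⟨⟨0, by omega⟩, Finset.mem_univ _⟩
    have hmin : ∀ i, x i₀ ≤ x i := fun i => hi₀ i (Finset.mem_univ i)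
    set a : ℝ := -x i₀ with hadef
    clear_value a
    have ha0 : 0 ≤ a := by
      have h1 : (n : ℝ) * x i₀ ≤ 0 := by
        have h2 : (n : ℝ) * x i₀ = ∑ _i : Fin n, x i₀ := by
          rw [Finset.sum_const, Finset.card_univ, Fintype.card_fin, nsmul_eq_mul]
        rw [h2, ← hsum]
        exact Finset.sum_le_sum fun i _ => hmin i
      have h3 : x i₀ ≤ 0 := by nlinarith only [h1, hn']
      rw [hadef]; linarith only [h3]
    set l : ℝ := a / m with hldef
    clear_value l
    have hml : m * l = a := by rw [hldef]; field_simp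
    -- pointwise inequality
    have hkey : ∀ i, (2*l - a)*(x i)^2 + ((2*a*l - l^2)*(x i) - l^2*a) ≤ (x i)^3 := by
      intro i
      have h1 : 0 ≤ (x i - l)^2 * (x i + a) :=
        mul_nonneg (sq_nonneg _) (by rw [hadef]; linarith only [hmin i])
      nlinarith only [h1]
    -- sum of the quadratic lower bounds
    have hBsum : ∑ i, ((2*l - a)*(x i)^2 + ((2*a*l - l^2)*(x i) - l^2*a))
        = (2*l - a)*S - (n : ℝ)*(l^2*a) := by
      rw [Finset.sum_add_distrib, Finset.sum_sub_distrib, ← Finset.mul_sum, ← Finset.mul_sum,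
        hsum, Finset.sum_const, Finset.card_univ, Fintype.card_fin, nsmul_eq_mul, ← hSdef]
      ring
    have hB : (2*l - a)*S - (n : ℝ)*(l^2*a) ≤ ∑ i, (x i)^3 := by
      rw [← hBsum]; exact Finset.sum_le_sum fun i _ => hkey i
    -- erase sums
    have hEsum : ∑ i ∈ Finset.univ.erase i₀, x i = a := by
      have h : x i₀ + ∑ i ∈ Finset.univ.erase i₀, x i = 0 := by
        rw [Finset.add_sum_erase Finset.univ x (Finset.mem_univ i₀)]; exact hsum
      rw [hadef]; linarith only [h]
    have hEsq : ∑ i ∈ Finset.univ.erase i₀, (x i)^2 = S - a^2 := by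
      have h : (x i₀)^2 + ∑ i ∈ Finset.univ.erase i₀, (x i)^2 = S := by
        rw [hSdef]
        exact Finset.add_sum_erase Finset.univ (fun i => (x i)^2) (Finset.mem_univ i₀)
      have ha2 : (x i₀)^2 = a^2 := by rw [hadef]; ring
      linarith only [h, ha2]
    set V : ℝ := ∑ i ∈ Finset.univ.erase i₀, (x i - l)^2 with hVdef
    clear_value V
    have hV0 : 0 ≤ V := by
      rw [hVdef]; exact Finset.sum_nonneg fun i _ => sq_nonneg _
    have hcard : ((Finset.univ.erase i₀).card : ℝ) = m := by
      rw [Finset.card_erase_of_mem (Finset.mem_univ i₀), Finset.card_univ, Fintype.card_fin]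
      rw [hmdef]
      have : 1 ≤ n := by omega
      push_cast [Nat.cast_sub this]
      ring
    have hVid : V = (S - a^2) - 2*l*a + m*l^2 := by
      rw [hVdef]
      have hexp : ∀ i, (x i - l)^2 = (x i)^2 - (2*l)*(x i) + l^2 := fun i => by ring
      rw [Finset.sum_congr rfl fun i _ => hexp i, Finset.sum_add_distrib,
        Finset.sum_sub_distrib, ← Finset.mul_sum, hEsum, hEsq, Finset.sum_const,
        nsmul_eq_mul, hcard]
    have haid : a^2 * (m+1) = m * (S - V) := by
      have h1 : m * V = m*S - m*a^2 - 2*((m*l)*a) + (m*l)*(m*l) := by rw [hVid]; ring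
      rw [hml] at h1
      linear_combination h1
    have hnm : (n : ℝ) = m + 1 := by rw [hmdef]; ring
    have hn2 : (n : ℝ) - 2 = m - 1 := by rw [hmdef]; ring
    set w : ℝ := Real.sqrt ((n : ℝ) * m) with hwdef
    clear_value w
    have hw0 : 0 < w := by
      rw [hwdef]
      exact Real.sqrt_pos.mpr (mul_pos (by linarith only [hn'] : (0:ℝ) < (n:ℝ)) hm0)
    obtain ⟨t, ht0, ht2⟩ : ∃ t : ℝ, 0 ≤ t ∧ t^2 = m*S/(m+1) :=
      ⟨Real.sqrt (m*S/(m+1)), Real.sqrt_nonneg _,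
        Real.sq_sqrt (by positivity)⟩
    have hkey2 : t * w = m * s := by
      have h1 : (t*w)^2 = (m*s)^2 := by
        rw [mul_pow, mul_pow, hwdef, Real.sq_sqrt
          (le_of_lt (mul_pos (by linarith only [hn'] : (0:ℝ) < (n:ℝ)) hm0)),
          ht2, hSs, hnm]
        field_simp
      have h2 : 0 ≤ t * w := mul_nonneg ht0 hw0.le
      have h3 : 0 ≤ m * s := mul_nonneg hm0.le (by rw [hsdef]; exact Real.sqrt_nonneg _)
      calc t*w = Real.sqrt ((t*w)^2) := (Real.sqrt_sq h2).symm
        _ = Real.sqrt ((m*s)^2) := by rw [h1]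
        _ = m*s := Real.sqrt_sq h3
    have hat : a ≤ t := by
      have h1 : a^2*(m+1) ≤ m*S := by
        linarith only [haid, mul_nonneg hm0.le hV0]
      have h2 : a^2 ≤ t^2 := by
        rw [ht2, le_div_iff₀ (by linarith only [hm0] : (0:ℝ) < m+1)]
        linarith only [h1]
      nlinarith only [h2, ha0, ht0]
    -- value of the bracket at t
    have ht3 : t^3 = (m*S/(m+1)) * t := by rw [pow_succ, ht2]
    have hbrt : (m-2)/m*S*t + (m+1)/m^2*t^3 = (m-1)/w * s^3 := by
      rw [ht3]
      have hs3 : s^3 = S * s := by rw [pow_succ, hSs]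
      rw [hs3]
      have hm1 : m + 1 ≠ 0 := by linarith only [hm0]
      field_simp
      linear_combination (m-1) * hkey2
    -- the squeeze
    have hBa : (2*l - a)*S - (n : ℝ)*(l^2*a) = -((m-2)/m*S*a + (m+1)/m^2*a^3) := by
      rw [hldef, hnm]
      field_simp
      ring
    have hheq : ∑ i, (x i)^3 = -((m-1)/w * s^3) := by
      rw [heq, hn2]
    have hchain : (m-2)/m*S*t + (m+1)/m^2*t^3 ≤ (m-2)/m*S*a + (m+1)/m^2*a^3 := by
      rw [hbrt]
      rw [hBa, hheq] at hB
      linarith only [hB]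
    have hfac : (m-2)/m*S*t + (m+1)/m^2*t^3 - ((m-2)/m*S*a + (m+1)/m^2*a^3)
        = (t - a) * ((m-2)/m*S + (m+1)/m^2*(t^2 + t*a + a^2)) := by ring
    have hpos : 0 < (m-2)/m*S + (m+1)/m^2*(t^2 + t*a + a^2) := by
      have h1 : 0 < t^2 := by
        rw [ht2]
        positivity
      have h2 : 0 ≤ t*a := mul_nonneg ht0 ha0
      have h3 : 0 ≤ (m-2)/m*S :=
        mul_nonneg (div_nonneg (by linarith only [hm2]) hm0.le) hS0
      have h4 : 0 < (m+1)/m^2 := by positivity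
      nlinarith only [h1, h2, h3, h4, sq_nonneg a]
    have hta : t = a := by
      by_contra hne
      have hlt : a < t := lt_of_le_of_ne hat (fun h => hne h.symm)
      have hprod : 0 < (t - a) * ((m-2)/m*S + (m+1)/m^2*(t^2 + t*a + a^2)) :=
        mul_pos (by linarith only [hlt]) hpos
      rw [← hfac] at hprod
      linarith only [hprod, hchain]
    -- V = 0
    have hVz : V = 0 := by
      have h1 : a^2 = m*S/(m+1) := by rw [← ht2, hta]
      have h2 : a^2*(m+1) = m*S := by
        rw [h1]; field_simp
      have h3 : m * V = 0 := by linarith only [haid, h2]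
      exact (mul_eq_zero.mp h3).resolve_left hm0.ne'
    have hxl : ∀ i ∈ Finset.univ.erase i₀, x i = l := by
      intro i hi
      rw [hVdef] at hVz
      have h1 := (Finset.sum_eq_zero_iff_of_nonneg
        (fun i (_ : i ∈ Finset.univ.erase i₀) => sq_nonneg (x i - l))).mp hVz i hi
      have h2 : x i - l = 0 := pow_eq_zero_iff two_ne_zero |>.mp h1
      linarith only [h2]
    refine ⟨l, i₀, funext fun i => ?_⟩
    rcases eq_or_ne i i₀ with h | h
    · rw [h, Function.update_self]
      have hxi : x i₀ = -a := by rw [hadef]; ring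
      rw [hxi, ← hml]; ring
    · rw [Function.update_of_ne h]
      exact hxl i (Finset.mem_erase.mpr ⟨h, Finset.mem_univ i⟩)


lemma okumura_forward {n : ℕ} (hn : 2 ≤ n) (x : Fin n → ℝ)
    (hsum : ∑ i, x i = 0)
    (habs : |∑ i, (x i) ^ 3| =
      ((n : ℝ) - 2) / Real.sqrt ((n : ℝ) * ((n : ℝ) - 1)) *
        (Real.sqrt (∑ i, (x i) ^ 2)) ^ 3) :
    ∃ (lam : ℝ) (i₀ : Fin n),
      x = Function.update (fun _ : Fin n => lam) i₀ (-((n : ℝ) - 1) * lam) := by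
  rcases eq_or_lt_of_le hn with h2 | h3
  · -- n = 2
    subst h2
    refine ⟨x 0, 1, funext fun i => ?_⟩
    have hs : x 0 + x 1 = 0 := by
      have := hsum
      rw [Fin.sum_univ_two] at this
      exact this
    fin_cases i <;> simp [Function.update_apply] <;> push_cast <;> linarith
  · -- n ≥ 3
    have hn3 : 3 ≤ n := h3
    have hc : 0 ≤ ((n : ℝ) - 2) / Real.sqrt ((n : ℝ) * ((n : ℝ) - 1)) *
        (Real.sqrt (∑ i, (x i) ^ 2)) ^ 3 := by
      have hn' : (3 : ℝ) ≤ (n : ℝ) := by exact_mod_cast hn3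
      have h1 : 0 ≤ (n : ℝ) - 2 := by linarith
      positivity
    rcases abs_eq hc |>.mp habs with hpos | hneg
    · -- sum of cubes positive: apply to -x
      obtain ⟨lam, i₀, hup⟩ := okumura_min hn3 (fun i => -x i)
        (by beta_reduce; simpa using hsum)
        (by
          beta_reduce
          have h1 : ∑ i, (-x i) ^ 3 = -∑ i, (x i) ^ 3 := by
            rw [← Finset.sum_neg_distrib]
            exact Finset.sum_congr rfl fun i _ => by ring
          have h2 : ∑ i, (-x i) ^ 2 = ∑ i, (x i) ^ 2 :=
            Finset.sum_congr rfl fun i _ => by ring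
          rw [h1, h2, hpos])
      refine ⟨-lam, i₀, funext fun i => ?_⟩
      have h := congr_fun hup i
      rcases eq_or_ne i i₀ with hi | hi
      · rw [hi] at h ⊢
        rw [Function.update_self] at h ⊢
        linarith
      · rw [Function.update_of_ne hi] at h ⊢
        linarith
    · -- sum of cubes negative
      exact okumura_min hn3 x hsum (by rw [hneg])


lemma real_spectral {n : ℕ} (T : Matrix (Fin n) (Fin n) ℝ) (hsymm : T.IsSymm) :
    ∃ (P : Matrix (Fin n) (Fin n) ℝ) (d : Fin n → ℝ),
      P * P.transpose = 1 ∧ T = P.transpose * Matrix.diagonal d * P := by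
  have hH : T.IsHermitian := hsymm
  set u : Matrix (Fin n) (Fin n) ℝ := ↑(hH.eigenvectorUnitary) with hudef
  refine ⟨u.transpose, hH.eigenvalues, ?_, ?_⟩
  · rw [Matrix.transpose_transpose]
    have h1 : star u * u = 1 := Unitary.coe_star_mul_self hH.eigenvectorUnitary
    rwa [Matrix.star_eq_conjTranspose, Matrix.conjTranspose_eq_transpose_of_trivial] at h1
  · rw [Matrix.transpose_transpose]
    have h := hH.spectral_theorem
    rw [Unitary.conjStarAlgAut_apply, Matrix.star_eq_conjTranspose, Matrix.conjTranspose_eq_transpose_of_trivial] at h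
    have h2 : (RCLike.ofReal ∘ hH.eigenvalues : Fin n → ℝ) = hH.eigenvalues := by
      funext i; simp
    rw [h2] at h
    exact h


/-- Equality case of Huisken's inequality: `|tr(T³)| = ((n−2)/√(n(n−1))) ‖T‖³`
holds iff `T` is orthogonally diagonalizable with `n−1` eigenvalues `λ`
and one eigenvalue `−(n−1)λ`. -/
theorem stmt_1 (n : ℕ) (hn : 2 ≤ n) (T : Matrix (Fin n) (Fin n) ℝ)
    (hsymm : T.IsSymm) (htr : T.trace = 0) :
    |(T ^ 3).trace| =
      ((n : ℝ) - 2) / Real.sqrt ((n : ℝ) * ((n : ℝ) - 1)) *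
        (Real.sqrt (∑ i, ∑ j, (T i j) ^ 2)) ^ 3 ↔
    ∃ (lam : ℝ) (P : Matrix (Fin n) (Fin n) ℝ) (i₀ : Fin n),
      P * P.transpose = 1 ∧
      T = P.transpose * Matrix.diagonal
        (Function.update (fun _ : Fin n => lam) i₀ (-((n : ℝ) - 1) * lam)) * P := by
  constructor
  · intro habs
    obtain ⟨P, d, hP, hT⟩ := real_spectral T hsymm
    obtain ⟨h1, h2, h3⟩ := traces_aux P hP d T hT
    have hsum : ∑ i, d i = 0 := by rw [← h1]; exact htr
    have habs' : |∑ i, (d i) ^ 3| =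
        ((n : ℝ) - 2) / Real.sqrt ((n : ℝ) * ((n : ℝ) - 1)) *
          (Real.sqrt (∑ i, (d i) ^ 2)) ^ 3 := by
      rw [← h2, ← h3]; exact habs
    obtain ⟨lam, i₀, hupd⟩ := okumura_forward hn d hsum habs'
    exact ⟨lam, P, i₀, hP, by rw [← hupd]; exact hT⟩
  · rintro ⟨lam, P, i₀, hP, hT⟩
    obtain ⟨h1, h2, h3⟩ := traces_aux P hP _ T hT
    rw [h2, h3]
    exact eq_of_update hn lam i₀
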